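/- Let n and s be coprime integers with 1 < n < s, let S be the additive submonoid of ℕ generated by n and s, set g = (n−1)(s−1)/2, and let w_1* < w_2* < ... be the increasing enumeration of S (so w_1* = 0). Then for every index i ≥ g+1, the i-th smallest element of S equals g − 1 + i. -/

import Mathlib

def Pz (n s : ℕ) (x : ℤ) : Prop := ∃ a b : ℤ, 0 ≤ a ∧ 0 ≤ b ∧ x = a * n + b * s

lemma canonical {n s : ℕ} (h2 : 0 < s) (hcop : Nat.Coprime n s) (x : ℤ) :
    ∃ a b : ℤ, 0 ≤ a ∧ a < s ∧ x = a * n + b * s := by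
  obtain ⟨u, v, huv⟩ : IsCoprime (n : ℤ) (s : ℤ) := by
    rw [Int.isCoprime_iff_gcd_eq_one]; exact_mod_cast hcop
  have hs : (0:ℤ) < s := by exact_mod_cast h2
  refine ⟨(u * x) % s, (u * x) / s * n + v * x, Int.emod_nonneg _ hs.ne',
    Int.emod_lt_of_pos _ hs, ?_⟩
  have h := Int.emod_add_mul_ediv (u * x) s
  calc x = x * (u * n + v * s) := by rw [huv]; ring
    _ = (u * x % s + s * (u * x / s)) * n + v * x * s := by rw [h]; ring
    _ = u * x % ↑s * ↑n + (u * x / ↑s * ↑n + v * x) * ↑s := by ring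

-- Pz is equivalent to the canonical b being nonneg
lemma Pz_iff {n s : ℕ} (h1 : 0 < n) (h2 : 0 < s) (hcop : Nat.Coprime n s)
    {x a b : ℤ} (ha0 : 0 ≤ a) (has : a < s) (hx : x = a * n + b * s) :
    Pz n s x ↔ 0 ≤ b := by
  constructor
  · rintro ⟨a', b', ha', hb', hx'⟩
    have hsn : IsCoprime (s : ℤ) (n : ℤ) := by
      rw [Int.isCoprime_iff_gcd_eq_one]; exact_mod_cast hcop.symm
    have hdvd : (s:ℤ) ∣ (a' - a) := by
      refine hsn.dvd_of_dvd_mul_right ⟨b - b', ?_⟩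
      nlinarith [hx, hx']
    obtain ⟨k, hk⟩ := hdvd
    have hk0 : 0 ≤ k := by nlinarith
    have hn : (0:ℤ) < n := by exact_mod_cast h1
    have hs : (0:ℤ) < s := by exact_mod_cast h2
    have hb : b = b' + k * n := by
      have h3 : (a' - a) * n = (b - b') * s := by nlinarith
      rw [hk] at h3
      have : (s:ℤ) * (k * n) = s * (b - b') := by ring_nf; ring_nf at h3; linarith
      have := mul_left_cancel₀ hs.ne' this
      linarith
    nlinarith
  · intro hb; exact ⟨a, b, ha0, hb, hx⟩

lemma symmetry {n s : ℕ} (h1 : 0 < n) (h2 : 0 < s) (hcop : Nat.Coprime n s) (x : ℤ) :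
    Pz n s x ↔ ¬ Pz n s ((n*s - n - s : ℤ) - x) := by
  obtain ⟨a, b, ha0, has, hx⟩ := canonical h2 hcop x
  rw [Pz_iff h1 h2 hcop ha0 has hx]
  have hy : (n*s - n - s : ℤ) - x = (s - 1 - a) * n + (-1 - b) * s := by rw [hx]; ring
  rw [Pz_iff h1 h2 hcop (by linarith) (by linarith) hy]
  omega

lemma mem_iff_Pz {n s : ℕ} (x : ℕ) :
    x ∈ AddSubmonoid.closure ({n, s} : Set ℕ) ↔ Pz n s x := by
  rw [AddSubmonoid.mem_closure_pair]
  constructor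
  · rintro ⟨a, b, h⟩
    exact ⟨a, b, Int.ofNat_nonneg a, Int.ofNat_nonneg b, by simp only [smul_eq_mul] at h; push_cast [← h]; ring⟩
  · rintro ⟨a, b, ha, hb, h⟩
    refine ⟨a.toNat, b.toNat, ?_⟩
    have : ((a.toNat * n + b.toNat * s : ℕ) : ℤ) = (x : ℤ) := by
      push_cast [Int.toNat_of_nonneg ha, Int.toNat_of_nonneg hb]; linarith
    simpa [smul_eq_mul] using Nat.cast_injective this

lemma nat_symm {n s : ℕ} (h1 : 1 < n) (h2 : n < s) (hcop : Nat.Coprime n s)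
    {x : ℕ} (hx : x ≤ n * s - n - s) :
    x ∈ AddSubmonoid.closure ({n, s} : Set ℕ) ↔
      (n * s - n - s - x) ∉ AddSubmonoid.closure ({n, s} : Set ℕ) := by
  have hns : n + s ≤ n * s := Nat.add_le_mul h1 (by omega)
  have hcast : ((n * s - n - s - x : ℕ) : ℤ) = (n*s - n - s : ℤ) - x := by
    have : x ≤ n * s - n - s := hx
    omega
  rw [mem_iff_Pz, mem_iff_Pz, hcast]
  exact symmetry (by omega) (by omega) hcop x

theorem nsCurve_nongaps_stabilize (n s g : ℕ) (h1 : 1 < n) (h2 : n < s)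
    (hcop : Nat.Coprime n s) (hg : g = (n - 1) * (s - 1) / 2) :
    ∀ i : ℕ, g + 1 ≤ i →
      Nat.nth (fun k => k ∈ AddSubmonoid.closure ({n, s} : Set ℕ)) (i - 1) = g - 1 + i := by
  classical
  set p : ℕ → Prop := fun k => k ∈ AddSubmonoid.closure ({n, s} : Set ℕ) with hp
  set F : ℕ := n * s - n - s with hF
  have hns : n + s ≤ n * s := Nat.add_le_mul h1 (by omega)
  have hn1 : 1 ≤ n := by omega
  have hs1 : 1 ≤ s := by omega
  have key : (n - 1) * (s - 1) = F + 1 := by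
    obtain ⟨a, ha⟩ : ∃ a, n = a + 1 := ⟨n - 1, by omega⟩
    obtain ⟨b, hb⟩ : ∃ b, s = b + 1 := ⟨s - 1, by omega⟩
    have hmul : n * s + 1 = (n - 1) * (s - 1) + n + s := by
      rw [ha, hb]; simp only [Nat.add_sub_cancel]; ring
    omega
  have h2dvd : 2 ∣ (n - 1) * (s - 1) := by
    rcases Nat.even_or_odd n with hn | hn
    · rcases Nat.even_or_odd s with hs | hs
      · exfalso
        have : (2 : ℕ) ∣ Nat.gcd n s := Nat.dvd_gcd hn.two_dvd hs.two_dvd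
        rw [hcop] at this; omega
      · obtain ⟨k, hk⟩ := hs
        exact Dvd.dvd.mul_left (show 2 ∣ s - 1 by omega) _
    · obtain ⟨k, hk⟩ := hn
      exact Dvd.dvd.mul_right (show 2 ∣ n - 1 by omega) _
  have hglb : 2 ≤ (n - 1) * (s - 1) := by
    calc 2 = 1 * 2 := by omega
    _ ≤ (n - 1) * (s - 1) := Nat.mul_le_mul (by omega) (by omega)
  have hFg : F + 1 = 2 * g := by omega
  have hg1 : 1 ≤ g := by omega
  have frob : FrobeniusNumber F {n, s} := frobeniusNumber_pair hcop h1 (by omega)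
  have hub : ∀ k, ¬ p k → k ≤ F := fun k hk => frob.2 hk
  -- symmetry bijection on range (F+1)
  have hcard : ((Finset.range (F+1)).filter p).card
      = ((Finset.range (F+1)).filter fun x => ¬ p x).card := by
    apply Finset.card_nbij' (i := fun x => F - x) (j := fun x => F - x)
    · intro a ha
      simp only [Finset.mem_coe, Finset.mem_filter, Finset.mem_range] at ha ⊢
      refine ⟨by omega, ?_⟩
      intro hmem
      have := (nat_symm h1 h2 hcop (show a ≤ n*s-n-s by omega)).mp ha.2
      exact this hmem
    · intro a ha
      simp only [Finset.mem_coe, Finset.mem_filter, Finset.mem_range] at ha ⊢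
      refine ⟨by omega, ?_⟩
      have hsym := nat_symm h1 h2 hcop (show F - a ≤ n*s-n-s by omega)
      rw [show n*s-n-s - (F - a) = a by omega] at hsym
      rw [show (F - a : ℕ) = n*s-n-s - a by omega] at hsym ⊢
      exact hsym.mpr ha.2
    · intro a ha
      simp only [Finset.mem_coe, Finset.mem_filter, Finset.mem_range] at ha
      show F - (F - a) = a
      omega
    · intro a ha
      simp only [Finset.mem_coe, Finset.mem_filter, Finset.mem_range] at ha
      show F - (F - a) = a
      omega
  have htot := Finset.card_filter_add_card_filter_not (s := Finset.range (F+1)) p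
  rw [Finset.card_range] at htot
  have hgaps : ((Finset.range (F+1)).filter fun x => ¬ p x).card = g := by omega
  -- count for large m
  have hcount : ∀ m, F + 1 ≤ m → Nat.count p m = m - g := by
    intro m hm
    have hfeq : ((Finset.range m).filter fun x => ¬ p x)
        = (Finset.range (F+1)).filter fun x => ¬ p x := by
      ext x
      simp only [Finset.mem_filter, Finset.mem_range]
      constructor
      · rintro ⟨_, hx⟩; exact ⟨by have := hub x hx; omega, hx⟩
      · rintro ⟨_, hx⟩; exact ⟨by omega, hx⟩
    have htot' := Finset.card_filter_add_card_filter_not (s := Finset.range m)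
      (fun x => p x)
    rw [Finset.card_range, hfeq, hgaps] at htot'
    rw [Nat.count_eq_card_filter_range]
    omega
  intro i hi
  have hpm : p ((i - 1) + g) := by
    by_contra hmem
    have := hub _ hmem
    omega
  have := Nat.nth_count (p := p) hpm
  rw [hcount ((i - 1) + g) (by omega)] at this
  rw [show (i - 1) + g - g = i - 1 by omega] at this
  rw [this]
  omega
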